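/- Tightness construction, exact success probability: for the channel W on X = [n], n = kt, Y = t-subsets of [n], W(y|x) = 1/C(n−1,t−1)·1[x∈y], and any 1 ≤ ℓ ≤ n, the maximum success probability is S(W,ℓ) = (k/ℓ)(1 − C(n−ℓ,t)/C(n,t)). -/

import Mathlib

open Finset

/-- tightness construction, exact success probability. For the channel on
`X = [n]`, `n = kt`, `Y` the `t`-subsets of `[n]`, `W(y|x) = 1/C(n−1,t−1)·1[x∈y]`, and any
`1 ≤ ℓ ≤ n`, the maximum success probability is `S(W,ℓ) = (k/ℓ)(1 − C(n−ℓ,t)/C(n,t))`. -/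
theorem tightness_success_prob (k t n : ℕ) (hk : 1 ≤ k) (ht : 1 ≤ t) (hn : n = k * t)
    (W : Fin n → {s : Finset (Fin n) // s.card = t} → ℝ)
    (hW : ∀ x y, W x y = if x ∈ y.1 then (1 : ℝ) / ((n - 1).choose (t - 1)) else 0)
    (ℓ : ℕ) (hℓ : 1 ≤ ℓ) (hℓn : ℓ ≤ n) :
    (1 / (ℓ : ℝ)) *
        sSup { v : ℝ | ∃ S : Finset (Fin n), S.card = ℓ ∧ v = ∑ y, ⨆ x ∈ S, W x y } =
      ((k : ℝ) / ℓ) * (1 - ((n - ℓ).choose t : ℝ) / (n.choose t : ℝ)) := by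
  have hn1 : 1 ≤ n := le_trans hℓ hℓn
  have htn : t ≤ n := by
    calc t = 1 * t := (one_mul t).symm
    _ ≤ k * t := Nat.mul_le_mul_right t hk
    _ = n := hn.symm
  have hC'pos : 0 < (n - 1).choose (t - 1) := Nat.choose_pos (by omega)
  have hNpos : 0 < n.choose t := Nat.choose_pos htn
  set c : ℝ := 1 / ((n - 1).choose (t - 1)) with hc
  have hc0 : 0 ≤ c := by positivity
  -- key identity
  have hkey : (n - 1).choose (t - 1) * k = n.choose t := by
    have h := Nat.add_one_mul_choose_eq (n - 1) (t - 1)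
    have h1 : n - 1 + 1 = n := by omega
    have h2 : t - 1 + 1 = t := by omega
    rw [h1, h2] at h
    have h3 : ((n - 1).choose (t - 1) * k) * t = n.choose t * t := by
      rw [← h, hn]; ring
    exact Nat.eq_of_mul_eq_mul_right ht h3
  -- value of the sum for any S of card ℓ
  have hval : ∀ S : Finset (Fin n), S.card = ℓ →
      (∑ y : {s : Finset (Fin n) // s.card = t}, ⨆ x ∈ S, W x y)
        = ((n.choose t : ℝ) - ((n - ℓ).choose t : ℝ)) * c := by
    intro S hS
    haveI : Nonempty (Fin n) := ⟨⟨0, by omega⟩⟩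
    have hterm : ∀ y : {s : Finset (Fin n) // s.card = t},
        (⨆ x ∈ S, W x y) = if (S ∩ y.1).Nonempty then c else 0 := by
      intro y
      have hx : ∀ x : Fin n, (⨆ _ : x ∈ S, W x y) = if x ∈ S ∩ y.1 then c else 0 := by
        intro x
        rw [ciSup_eq_ite]
        by_cases hxS : x ∈ S <;>
          simp [hxS, hW, Real.sSup_empty, Finset.mem_inter, hc]
      simp_rw [hx]
      rw [← Finset.sup'_univ_eq_ciSup]
      rcases (S ∩ y.1).eq_empty_or_nonempty with he | hne
      · simp [he]
      · rw [if_pos hne]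
        obtain ⟨x0, hx0⟩ := hne
        apply le_antisymm
        · apply Finset.sup'_le
          intro x _
          split_ifs <;> simp [hc0]
        · have := Finset.le_sup' (fun x : Fin n => if x ∈ S ∩ y.1 then c else 0)
            (Finset.mem_univ x0)
          rw [if_pos hx0] at this; exact this
    simp_rw [hterm]
    rw [Finset.sum_ite, Finset.sum_const, Finset.sum_const, smul_zero, add_zero]
    -- count the complement
    have hcompl : (univ.filter
        (fun y : {s : Finset (Fin n) // s.card = t} => ¬ (S ∩ y.1).Nonempty)).card
        = (n - ℓ).choose t := by
      have hSc : Sᶜ.card = n - ℓ := by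
        rw [Finset.card_compl, hS, Fintype.card_fin]
      rw [← hSc, ← Finset.card_powersetCard]
      apply Finset.card_bij (fun y _ => y.1)
      · intro y hy
        simp only [Finset.mem_filter, Finset.not_nonempty_iff_eq_empty] at hy
        rw [Finset.mem_powersetCard]
        refine ⟨fun a ha => ?_, y.2⟩
        rw [Finset.mem_compl]
        intro haS
        have : a ∈ S ∩ y.1 := Finset.mem_inter.mpr ⟨haS, ha⟩
        simp [hy.2] at this
      · intro y₁ _ y₂ _ h
        exact Subtype.ext h
      · intro s hs
        rw [Finset.mem_powersetCard] at hs
        refine ⟨⟨s, hs.2⟩, ?_, rfl⟩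
        simp only [Finset.mem_filter, Finset.mem_univ, true_and,
          Finset.not_nonempty_iff_eq_empty]
        apply Finset.eq_empty_of_forall_notMem
        intro a ha
        rw [Finset.mem_inter] at ha
        exact (Finset.mem_compl.mp (hs.1 ha.2)) ha.1
    have htotal : (univ.filter
        (fun y : {s : Finset (Fin n) // s.card = t} => (S ∩ y.1).Nonempty)).card
        = n.choose t - (n - ℓ).choose t := by
      have := Finset.card_filter_add_card_filter_not
        (s := (univ : Finset {s : Finset (Fin n) // s.card = t}))
        (p := fun y => (S ∩ y.1).Nonempty)
      rw [Finset.card_univ, Fintype.card_finset_len, Fintype.card_fin] at this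
      omega
    rw [htotal, nsmul_eq_mul]
    have hle : (n - ℓ).choose t ≤ n.choose t :=
      Nat.choose_le_choose t (Nat.sub_le n ℓ)
    rw [Nat.cast_sub hle]
  -- the set is a singleton
  obtain ⟨S₀, _, hS₀⟩ := Finset.exists_subset_card_eq (s := (univ : Finset (Fin n))) (n := ℓ)
    (by simpa using hℓn)
  have hset : { v : ℝ | ∃ S : Finset (Fin n), S.card = ℓ ∧ v = ∑ y, ⨆ x ∈ S, W x y }
      = {((n.choose t : ℝ) - ((n - ℓ).choose t : ℝ)) * c} := by
    ext v
    simp only [Set.mem_setOf_eq, Set.mem_singleton_iff]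
    constructor
    · rintro ⟨S, hS, rfl⟩; exact hval S hS
    · rintro rfl; exact ⟨S₀, hS₀, (hval S₀ hS₀).symm⟩
  rw [hset, csSup_singleton]
  -- final arithmetic
  have hcR : c = (k : ℝ) / (n.choose t : ℝ) := by
    have hN : (n.choose t : ℝ) = ((n - 1).choose (t - 1) : ℝ) * k := by
      exact_mod_cast hkey.symm
    rw [hc, hN, div_eq_div_iff (by exact_mod_cast hC'pos.ne') (by positivity)]
    ring
  rw [hcR]
  have hN0 : (n.choose t : ℝ) ≠ 0 := by exact_mod_cast hNpos.ne'
  have hl0 : (ℓ : ℝ) ≠ 0 := by exact_mod_cast hℓ.trans_lt' Nat.zero_lt_one |>.ne'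
  field_simp
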